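/- If (f_n) and (g_n) are frames in a separable Hilbert space H that are dual to each other (i.e. their analysis operators U, V satisfy V*U = I), then dim(Ker U*) = dim(Ker V*); that is, dual frames have the same excess. -/

import Mathlib

open scoped InnerProductSpace

noncomputable section

/-- The sequence space ℓ² over ℂ indexed by ℕ. -/
abbrev ell2 : Type := lp (fun _ : ℕ => ℂ) 2

/-- `f` is a frame for `H`: there are frame bounds `0 < A ≤ B`. -/
def IsFrame {H : Type*} [NormedAddCommGroup H] [InnerProductSpace ℂ H]
    (f : ℕ → H) : Prop :=
  ∃ A B : ℝ, 0 < A ∧ 0 < B ∧ ∀ x : H,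
    A * ‖x‖ ^ 2 ≤ ∑' n, ‖⟪x, f n⟫_ℂ‖ ^ 2 ∧ ∑' n, ‖⟪x, f n⟫_ℂ‖ ^ 2 ≤ B * ‖x‖ ^ 2

/-- `U` is the analysis operator of the sequence `f`. -/
def IsAnalysisOp {H : Type*} [NormedAddCommGroup H] [InnerProductSpace ℂ H]
    (f : ℕ → H) (U : H →L[ℂ] ell2) : Prop :=
  ∀ (x : H) (n : ℕ), (U x : ∀ _ : ℕ, ℂ) n = ⟪x, f n⟫_ℂ

/-- Auxiliary: if `V* ∘ U = id`, then `rank (ker U*) ≤ rank (ker V*)`. -/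
theorem aux_rank_ker_le
    {H F : Type*} [NormedAddCommGroup H] [InnerProductSpace ℂ H] [CompleteSpace H]
    [NormedAddCommGroup F] [InnerProductSpace ℂ F] [CompleteSpace F]
    (U V : H →L[ℂ] F)
    (h1 : ∀ x : H, (ContinuousLinearMap.adjoint V) (U x) = x) :
    Module.rank ℂ (LinearMap.ker (ContinuousLinearMap.adjoint U : F →ₗ[ℂ] H)) ≤
      Module.rank ℂ (LinearMap.ker (ContinuousLinearMap.adjoint V : F →ₗ[ℂ] H)) := by
  set U' := ContinuousLinearMap.adjoint U with hU'
  set V' := ContinuousLinearMap.adjoint V with hV'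
  -- U'U is injective
  have hUinj : ∀ y : H, U y = 0 → y = 0 := by
    intro y hy
    have := h1 y
    rw [hy, map_zero] at this
    exact this.symm
  have hUU : ∀ y : H, U' (U y) = 0 → y = 0 := by
    intro y hy
    have h2 : ⟪U y, U y⟫_ℂ = 0 := by
      have := ContinuousLinearMap.adjoint_inner_left U y (U y)
      rw [← hU'] at this
      rw [← this, hy, inner_zero_left]
    exact hUinj y (inner_self_eq_zero.mp h2)
  -- the map c ↦ c - U (V' c) sends ker U' into ker V'
  have hmem : ∀ c ∈ LinearMap.ker (U' : F →ₗ[ℂ] H), (c - U (V' c)) ∈ LinearMap.ker (V' : F →ₗ[ℂ] H) := by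
    intro c hc
    have : V' (c - U (V' c)) = V' c - V' c := by
      rw [map_sub, h1 (V' c)]
    simp [LinearMap.mem_ker, this]
  let T : (LinearMap.ker (U' : F →ₗ[ℂ] H)) →ₗ[ℂ] (LinearMap.ker (V' : F →ₗ[ℂ] H)) :=
    { toFun := fun c => ⟨c.1 - U (V' c.1), hmem c.1 c.2⟩
      map_add' := by
        intro a b
        apply Subtype.ext
        simp only [Submodule.coe_add, map_add]
        abel
      map_smul' := by
        intro m a
        apply Subtype.ext
        simp only [Submodule.coe_smul, map_smul, RingHom.id_apply, smul_sub] }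
  have hTinj : Function.Injective T := by
    intro a b hab
    have h := congrArg (Subtype.val) hab
    simp only [T, LinearMap.coe_mk, AddHom.coe_mk] at h
    -- h : a.1 - U (V' a.1) = b.1 - U (V' b.1)
    have hd : (a.1 - b.1) = U (V' (a.1 - b.1)) := by
      rw [map_sub, map_sub]
      rw [sub_eq_sub_iff_sub_eq_sub] at h
      exact h
    have hker : U' (a.1 - b.1) = 0 := by
      rw [map_sub]
      have ha := a.2
      have hb := b.2
      rw [LinearMap.mem_ker, ContinuousLinearMap.coe_coe] at ha hb
      rw [ha, hb, sub_zero]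
    rw [hd] at hker
    have : V' (a.1 - b.1) = 0 := hUU _ hker
    have : a.1 - b.1 = 0 := by rw [hd, this, map_zero]
    exact Subtype.ext (sub_eq_zero.mp this)
  exact LinearMap.rank_le_of_injective T hTinj

/-- Dual frames have the same excess. -/
theorem dual_frames_same_excess
    {H : Type*} [NormedAddCommGroup H] [InnerProductSpace ℂ H] [CompleteSpace H]
    (f g : ℕ → H) (hf : IsFrame f) (hg : IsFrame g)
    (U V : H →L[ℂ] ell2) (hU : IsAnalysisOp f U) (hV : IsAnalysisOp g V)
    (hdual : (ContinuousLinearMap.adjoint V) ∘L U = ContinuousLinearMap.id ℂ H) :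
    Module.rank ℂ (LinearMap.ker (ContinuousLinearMap.adjoint U : ell2 →ₗ[ℂ] H)) =
      Module.rank ℂ (LinearMap.ker (ContinuousLinearMap.adjoint V : ell2 →ₗ[ℂ] H)) := by
  have h1 : ∀ x : H, (ContinuousLinearMap.adjoint V) (U x) = x := by
    intro x
    have := congrArg (fun (A : H →L[ℂ] H) => A x) hdual
    simpa using this
  have h2 : ∀ x : H, (ContinuousLinearMap.adjoint U) (V x) = x := by
    intro x
    have hadj := congrArg ContinuousLinearMap.adjoint hdual
    rw [ContinuousLinearMap.adjoint_comp, ContinuousLinearMap.adjoint_adjoint,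
      ContinuousLinearMap.adjoint_id] at hadj
    have := congrArg (fun (A : H →L[ℂ] H) => A x) hadj
    simpa using this
  exact le_antisymm (aux_rank_ker_le U V h1) (aux_rank_ker_le V U h2)
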